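/- arXiv:1004.0978 — 2 statements merged into one kernel-verified Lean document; each statement's English description precedes it below -/
import Mathlib

section
/- Let n ≥ 2 be an integer. For every 1-periodic function f : ℝ → ℝ of class Cⁿ⁻², there exists a unique 1-periodic function u : ℝ → ℝ of class Cⁿ such that μ(u) − u'' = f; moreover, for x ∈ [0,1] this u is given explicitly by u(x) = (x²/2 − x/2 + 13/12) ∫₀¹ f(a) da + (x − 1/2) ∫₀¹∫₀ᵃ f(b) db da − ∫₀ˣ∫₀ᵃ f(b) db da + ∫₀¹∫₀ᵃ∫₀ᵇ f(c) dc db da. -/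
/-- The mean `μ(f) = ∫₀¹ f(x) dx` of a (1-periodic) function. -/
noncomputable def circMean (f : ℝ → ℝ) : ℝ := ∫ x in (0:ℝ)..1, f x

open intervalIntegral

lemma periodic_deriv'' (g : ℝ → ℝ) (hg : Function.Periodic g 1) :
    Function.Periodic (deriv g) 1 := fun x => by
  have h : (fun y => g (y + 1)) = g := funext hg
  rw [← deriv_comp_add_const g 1 x, h]

lemma aux_const (g : ℝ → ℝ) (hg : Differentiable ℝ g) (hper : Function.Periodic g 1)
    (c : ℝ) (hc : ∀ x, deriv g x = c) : c = 0 ∧ ∀ x, g x = g 0 := by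
  have h1 : ∀ x, g x = g 0 + c * x := by
    have hcon : ∀ x : ℝ, g x - c * x = g 0 - c * 0 := by
      intro x
      apply is_const_of_deriv_eq_zero (𝕜 := ℝ) (f := fun t => g t - c * t)
      · exact hg.sub (differentiable_id.const_mul c)
      · intro y
        have hd := (hg y).hasDerivAt
        rw [hc y] at hd
        have hd2 : HasDerivAt (fun t => g t - c * t) (c - c * 1) y :=
          hd.sub ((hasDerivAt_id y).const_mul c)
        simpa using hd2.deriv
    intro x; linarith [hcon x]
  have hc0 : c = 0 := by
    have h2 := hper 0
    rw [zero_add, h1 1] at h2; linarith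
  exact ⟨hc0, fun x => by rw [h1 x, hc0]; ring⟩

/-- for `n ≥ 2` and a `1`-periodic `f` of class `Cⁿ⁻²`, there is a unique
`1`-periodic `u` of class `Cⁿ` with `μ(u) − u'' = f`, and on `[0,1]` this `u` is given
by the explicit integral formula. -/
theorem opA_bijective_with_explicit_inverse (n : ℕ) (hn : 2 ≤ n) (f : ℝ → ℝ)
    (hfper : Function.Periodic f 1) (hfreg : ContDiff ℝ (n - 2 : ℕ) f) :
    ∃ u : ℝ → ℝ,
      (Function.Periodic u 1 ∧ ContDiff ℝ n u ∧
        ∀ x : ℝ, circMean u - iteratedDeriv 2 u x = f x) ∧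
      (∀ x ∈ Set.Icc (0:ℝ) 1,
        u x = (x ^ 2 / 2 - x / 2 + 13 / 12) * (∫ a in (0:ℝ)..1, f a)
            + (x - 1 / 2) * (∫ a in (0:ℝ)..1, ∫ b in (0:ℝ)..a, f b)
            - (∫ a in (0:ℝ)..x, ∫ b in (0:ℝ)..a, f b)
            + ∫ a in (0:ℝ)..1, ∫ b in (0:ℝ)..a, ∫ c in (0:ℝ)..b, f c) ∧
      ∀ v : ℝ → ℝ,
        (Function.Periodic v 1 ∧ ContDiff ℝ n v ∧
          ∀ x : ℝ, circMean v - iteratedDeriv 2 v x = f x) → v = u := by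
  obtain ⟨m, rfl⟩ : ∃ m, n = m + 2 := ⟨n - 2, by omega⟩
  have hm2 : (m + 2) - 2 = m := by omega
  rw [hm2] at hfreg
  have hfc : Continuous f := hfreg.continuous
  set F : ℝ → ℝ := fun x => ∫ t in (0:ℝ)..x, f t with hFdef
  have hF' : ∀ x, HasDerivAt F (f x) x := fun x =>
    integral_hasDerivAt_right (hfc.intervalIntegrable _ _)
      (hfc.stronglyMeasurableAtFilter _ _) hfc.continuousAt
  have hFc : Continuous F := by
    rw [continuous_iff_continuousAt]; exact fun x => (hF' x).continuousAt
  set G : ℝ → ℝ := fun x => ∫ t in (0:ℝ)..x, F t with hGdef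
  have hG' : ∀ x, HasDerivAt G (F x) x := fun x =>
    integral_hasDerivAt_right (hFc.intervalIntegrable _ _)
      (hFc.stronglyMeasurableAtFilter _ _) hFc.continuousAt
  have hGc : Continuous G := by
    rw [continuous_iff_continuousAt]; exact fun x => (hG' x).continuousAt
  set m₀ : ℝ := ∫ t in (0:ℝ)..1, f t with hm₀def
  set I : ℝ := ∫ a in (0:ℝ)..1, F a with hIdef
  set J : ℝ := ∫ a in (0:ℝ)..1, G a with hJdef
  -- F (x+1) = F x + m₀
  have hFadd : ∀ x, F (x + 1) = F x + m₀ := by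
    intro x
    have h1 : (∫ t in (0:ℝ)..x, f t) + ∫ t in x..(x+1), f t = ∫ t in (0:ℝ)..(x+1), f t :=
      integral_add_adjacent_intervals (hfc.intervalIntegrable _ _) (hfc.intervalIntegrable _ _)
    have h2 : (∫ t in x..(x+1), f t) = ∫ t in (0:ℝ)..(0+1), f t :=
      hfper.intervalIntegral_add_eq x 0
    rw [zero_add] at h2
    simp only [hFdef, hm₀def]
    rw [← h1, h2]
  -- G (x+1) = G x + I + m₀ * x
  have hGadd : ∀ x, G (x + 1) = G x + (I + m₀ * x) := by
    intro x
    set H : ℝ → ℝ := fun a => F a - m₀ * a with hHdef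
    have hHc : Continuous H := hFc.sub (continuous_const.mul continuous_id)
    have hHper : Function.Periodic H 1 := by
      intro a; simp only [hHdef]; rw [hFadd a]; ring
    have h1 : (∫ t in (0:ℝ)..x, F t) + ∫ t in x..(x+1), F t = ∫ t in (0:ℝ)..(x+1), F t :=
      integral_add_adjacent_intervals (hFc.intervalIntegrable _ _) (hFc.intervalIntegrable _ _)
    have h2 : (∫ t in x..(x+1), F t) = (∫ t in x..(x+1), H t) + ∫ t in x..(x+1), m₀ * t := by
      rw [← integral_add (hHc.intervalIntegrable _ _)
        (Continuous.intervalIntegrable (by fun_prop : Continuous fun t : ℝ => m₀ * t) _ _)]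
      congr 1; funext t; simp [hHdef]
    have h3 : (∫ t in x..(x+1), H t) = ∫ t in (0:ℝ)..(0+1), H t :=
      hHper.intervalIntegral_add_eq x 0
    have h4 : (∫ t in (0:ℝ)..1, H t) = I - m₀ * (1/2) := by
      simp only [hHdef]
      rw [integral_sub (hFc.intervalIntegrable _ _)
        (Continuous.intervalIntegrable (by fun_prop : Continuous fun t : ℝ => m₀ * t) _ _)]
      rw [integral_const_mul, integral_id]
      norm_num
      exact hIdef.symm
    have h5 : (∫ t in x..(x+1), m₀ * t) = m₀ * (((x+1)^2 - x^2)/2) := by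
      rw [integral_const_mul, integral_id]
    rw [zero_add, h4] at h3
    simp only [hGdef]
    rw [← h1, h2, h3, h5]; ring
  -- the solution
  set u : ℝ → ℝ := fun x => (x^2/2 - x/2 + 13/12) * m₀ + (x - 1/2) * I - G x + J with hudef
  have huc : Continuous u := by fun_prop
  -- periodicity
  have huper : Function.Periodic u 1 := by
    intro x
    simp only [hudef]
    rw [hGadd x]; ring
  -- first derivative
  have hu' : ∀ x, HasDerivAt u ((x - 1/2) * m₀ + I - F x) x := by
    intro x
    have h1 : HasDerivAt (fun x : ℝ => (x^2/2 - x/2 + 13/12) * m₀ + (x - 1/2) * I)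
        ((2 * x ^ 1 / 2 - 1/2) * m₀ + 1 * I) x := by
      exact ((((hasDerivAt_pow 2 x).div_const 2).sub ((hasDerivAt_id x).div_const 2)).add_const
        (13/12) |>.mul_const m₀).add (((hasDerivAt_id x).sub_const (1/2)).mul_const I)
    have h2 := (h1.sub (hG' x)).add_const J
    exact h2.congr_deriv (by ring)
  have hderivu : deriv u = fun x => (x - 1/2) * m₀ + I - F x := funext fun x => (hu' x).deriv
  -- second derivative
  have hu'' : ∀ x, HasDerivAt (fun x => (x - 1/2) * m₀ + I - F x) (m₀ - f x) x := by
    intro x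
    have h1 := ((((hasDerivAt_id x).sub_const (1/2)).mul_const m₀).add_const I).sub (hF' x)
    exact h1.congr_deriv (by ring)
  have hit2 : ∀ x, iteratedDeriv 2 u x = m₀ - f x := by
    intro x
    have : iteratedDeriv 2 u = deriv (deriv u) := by
      simp [iteratedDeriv_succ, iteratedDeriv_one]
    rw [this, hderivu]
    exact (hu'' x).deriv
  -- smoothness
  have hFcd : ContDiff ℝ (m + 1 : ℕ) F := by
    rw [show ((m + 1 : ℕ) : WithTop ℕ∞) = (m : ℕ) + 1 by push_cast; rfl]
    refine contDiff_succ_iff_deriv.mpr ⟨fun x => (hF' x).differentiableAt, by simp, ?_⟩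
    rw [funext fun x => (hF' x).deriv]
    exact hfreg
  have hGcd : ContDiff ℝ (m + 2 : ℕ) G := by
    rw [show ((m + 2 : ℕ) : WithTop ℕ∞) = ((m + 1 : ℕ) : WithTop ℕ∞) + 1 by push_cast; rfl]
    refine contDiff_succ_iff_deriv.mpr ⟨fun x => (hG' x).differentiableAt, by simp, ?_⟩
    rw [funext fun x => (hG' x).deriv]
    exact hFcd
  have hucd : ContDiff ℝ (m + 2 : ℕ) u := by
    have hp : ContDiff ℝ (m + 2 : ℕ) (fun x : ℝ => (x^2/2 - x/2 + 13/12) * m₀ + (x - 1/2) * I) :=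
      ((((contDiff_id.pow 2).div_const 2).sub (contDiff_id.div_const 2)).add contDiff_const
        |>.mul contDiff_const).add ((contDiff_id.sub contDiff_const).mul contDiff_const)
    exact (hp.sub hGcd).add contDiff_const
  -- mean of u
  have hmean : circMean u = m₀ := by
    have hA : IntervalIntegrable (fun x : ℝ => (x^2/2 - x/2 + 13/12) * m₀ + (x - 1/2) * I)
        MeasureTheory.volume 0 1 := (Continuous.intervalIntegrable (by fun_prop) _ _)
    have hprim : ∀ x ∈ Set.uIcc (0:ℝ) 1, HasDerivAt
        (fun x : ℝ => (x^3/6 - x^2/4 + 13/12 * x) * m₀ + (x^2/2 - x/2) * I)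
        ((x^2/2 - x/2 + 13/12) * m₀ + (x - 1/2) * I) x := by
      intro x _
      have h1 := ((((hasDerivAt_pow 3 x).div_const 6).sub ((hasDerivAt_pow 2 x).div_const 4)).add
        ((hasDerivAt_id x).const_mul (13/12)) |>.mul_const m₀).add
        ((((hasDerivAt_pow 2 x).div_const 2).sub ((hasDerivAt_id x).div_const 2)).mul_const I)
      exact h1.congr_deriv (by norm_num only; ring)
    have hintA : (∫ x in (0:ℝ)..1, ((x^2/2 - x/2 + 13/12) * m₀ + (x - 1/2) * I)) = m₀ := by
      rw [integral_eq_sub_of_hasDerivAt hprim hA]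
      norm_num
    have : circMean u = (∫ x in (0:ℝ)..1, ((x^2/2 - x/2 + 13/12) * m₀ + (x - 1/2) * I))
        - (∫ x in (0:ℝ)..1, G x) + ∫ x in (0:ℝ)..1, (J : ℝ) := by
      rw [circMean]
      simp only [hudef]
      rw [integral_add ((hA.sub (hGc.intervalIntegrable _ _))) intervalIntegrable_const,
        integral_sub hA (hGc.intervalIntegrable _ _)]
    rw [this, hintA, ← hJdef]
    simp
  -- derivative facts for u
  have hud : Differentiable ℝ u := fun x => (hu' x).differentiableAt
  have hud' : Differentiable ℝ (deriv u) := by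
    rw [hderivu]; exact fun x => (hu'' x).differentiableAt
  have hderiv2u : ∀ x, deriv (deriv u) x = m₀ - f x := by
    intro x; rw [hderivu]; exact (hu'' x).deriv
  refine ⟨u, ⟨huper, hucd, fun x => by rw [hmean, hit2 x]; ring⟩, ?_, ?_⟩
  · intro x _
    simp only [hudef, hGdef, hFdef, hIdef, hJdef, hm₀def]
  · rintro v ⟨hvper, hvcd, hveq⟩
    have hvc : Continuous v := hvcd.continuous
    rw [show ((m + 2 : ℕ) : WithTop ℕ∞) = ((m + 1 : ℕ) : WithTop ℕ∞) + 1 by push_cast; rfl]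
      at hvcd
    obtain ⟨hvd, -, hvdcd⟩ := contDiff_succ_iff_deriv.mp hvcd
    have hvd' : Differentiable ℝ (deriv v) :=
      hvdcd.differentiable (by simp)
    have hv2 : ∀ x, deriv (deriv v) x = circMean v - f x := by
      intro x
      have h := hveq x
      have h2 : iteratedDeriv 2 v = deriv (deriv v) := by
        simp [iteratedDeriv_succ, iteratedDeriv_one]
      rw [h2] at h
      linarith
    set w : ℝ → ℝ := fun x => v x - u x with hwdef
    have hwper : Function.Periodic w 1 := hvper.sub huper
    have hwder : deriv w = fun x => deriv v x - deriv u x :=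
      funext fun x => deriv_sub (hvd x) (hud x)
    have hwd : Differentiable ℝ (deriv w) := by rw [hwder]; exact hvd'.sub hud'
    have hwperd : Function.Periodic (deriv w) 1 := periodic_deriv'' w hwper
    have hc : ∀ x, deriv (deriv w) x = circMean v - m₀ := by
      intro x
      rw [hwder, deriv_fun_sub (hvd' x) (hud' x), hv2 x, hderiv2u x]
      ring
    obtain ⟨hc0, hconst1⟩ := aux_const (deriv w) hwd hwperd (circMean v - m₀) hc
    obtain ⟨-, hconst2⟩ := aux_const w (hvd.sub hud) hwper (deriv w 0) hconst1
    have hk : circMean v - m₀ = w 0 := by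
      rw [← hmean]
      have h1 : circMean v - circMean u = ∫ x in (0:ℝ)..1, (v x - u x) :=
        (integral_sub (hvc.intervalIntegrable _ _) (huc.intervalIntegrable _ _)).symm
      have h2 : (∫ x in (0:ℝ)..1, (v x - u x)) = ∫ _x in (0:ℝ)..1, (w 0 : ℝ) := by
        apply integral_congr
        intro x _
        exact hconst2 x
      rw [h1, h2]
      simp only [integral_const, sub_zero, smul_eq_mul, one_mul]
    have hw0 : w 0 = 0 := by rw [← hk]; exact hc0
    funext x
    have := hconst2 x
    rw [hw0] at this
    simp only [hwdef] at this
    linarith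
end

section
/- Let u, w : ℝ → ℝ be 1-periodic of class C³, let ε₀ > 0, let J be an open interval containing 0, and let Φ : (−ε₀,ε₀) × J × ℝ → ℝ be smooth with, for each ε: Φ(ε,t,x+1) = Φ(ε,t,x) + 1, Φ_x(ε,t,x) > 0, Φ(ε,0,x) = x, and Φ_{xx}(ε,t,x) = Φ_x(ε,t,x) · ( μ(u+εw) ∫₀ᵗ Φ_x(ε,s,x) ds − m₀^ε(x) ∫₀ᵗ Φ_x(ε,s,x)⁻² ds ), where m₀^ε := μ(u+εw) − (u+εw)''. Set φ := Φ(0,·,·), ψ := ∂_ε Φ |_{ε=0}, and m₀ := μ(u) − u''. Then for all t ∈ J, x ∈ ℝ: ψ_{xx}(t,x) = ψ_x(t,x) ( μ(u) ∫₀ᵗ φ_x(s,x) ds − m₀(x) ∫₀ᵗ φ_x(s,x)⁻² ds ) + φ_x(t,x) ( μ(w) ∫₀ᵗ φ_x(s,x) ds + μ(u) ∫₀ᵗ ψ_x(s,x) ds ) − φ_x(t,x) ( (Aw)(x) ∫₀ᵗ φ_x(s,x)⁻² ds − 2 m₀(x) ∫₀ᵗ ψ_x(s,x) φ_x(s,x)⁻³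 ds ). -/
open Set

section PFhelpers

variable {E : Type*} [NormedAddCommGroup E] [NormedSpace ℝ E]

lemma PF_contDiffOn_fderiv_apply {f : E → ℝ} {S : Set E} (hf : ContDiffOn ℝ (⊤:ℕ∞) f S)
    (hS : IsOpen S) (v : E) :
    ContDiffOn ℝ (⊤:ℕ∞) (fun p => fderiv ℝ f p v) S := by
  have h1 : ContDiffOn ℝ (⊤:ℕ∞) (fun p => fderiv ℝ f p) S :=
    hf.fderiv_of_isOpen (m := ((⊤:ℕ∞) : WithTop ℕ∞)) hS (le_of_eq rfl)
  exact (ContinuousLinearMap.apply ℝ ℝ v).contDiff.comp_contDiffOn h1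

lemma PF_diffAt {f : E → ℝ} {S : Set E} (hf : ContDiffOn ℝ (⊤:ℕ∞) f S)
    (hS : IsOpen S) {p : E} (hp : p ∈ S) : DifferentiableAt ℝ f p :=
  (hf.contDiffAt (hS.mem_nhds hp)).differentiableAt
    (by simp)

lemma PF_fderiv_swap {f : E → ℝ} {S : Set E} (hf : ContDiffOn ℝ (⊤:ℕ∞) f S) (hS : IsOpen S)
    {p : E} (hp : p ∈ S) (v w : E) :
    fderiv ℝ (fun q => fderiv ℝ f q v) p w = fderiv ℝ (fun q => fderiv ℝ f q w) p v := by
  have hd : DifferentiableAt ℝ (fderiv ℝ f) p :=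
    (((hf.fderiv_of_isOpen (m := ((⊤:ℕ∞) : WithTop ℕ∞)) hS (le_of_eq rfl)).contDiffAt
      (hS.mem_nhds hp)).differentiableAt
      (by simp))
  have h1 : ∀ v w : E, fderiv ℝ (fun q => fderiv ℝ f q v) p w = fderiv ℝ (fderiv ℝ f) p w v := by
    intro v w
    have h := ((ContinuousLinearMap.apply ℝ ℝ v).hasFDerivAt.comp p hd.hasFDerivAt)
    have heq : (fun q => fderiv ℝ f q v) = ⇑(ContinuousLinearMap.apply ℝ ℝ v) ∘ fderiv ℝ f := rfl
    rw [heq, h.fderiv]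
    rfl
  rw [h1, h1]
  exact ((hf.contDiffAt (hS.mem_nhds hp)).isSymmSndFDerivAt
    (by rw [minSmoothness_of_isRCLikeNormedField, show ((2:WithTop ℕ∞)) = ((2:ℕ∞):WithTop ℕ∞) by rfl]; exact_mod_cast le_top)) w v

lemma PF_hasDerivAt_slice3 {f : ℝ×ℝ×ℝ → ℝ} {p : ℝ×ℝ×ℝ} (hd : DifferentiableAt ℝ f p) :
    HasDerivAt (fun y => f (p.1, p.2.1, y)) (fderiv ℝ f p ((0:ℝ),(0:ℝ),(1:ℝ))) p.2.2 := by
  have hc : HasDerivAt (fun y : ℝ => ((p.1, p.2.1, y) : ℝ×ℝ×ℝ)) ((0:ℝ),(0:ℝ),(1:ℝ)) p.2.2 :=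
    (hasDerivAt_const _ p.1).prodMk ((hasDerivAt_const _ p.2.1).prodMk (hasDerivAt_id p.2.2))
  have := hd.hasFDerivAt.comp_hasDerivAt p.2.2 hc
  exact this

lemma PF_hasDerivAt_slice1 {f : ℝ×ℝ×ℝ → ℝ} {p : ℝ×ℝ×ℝ} (hd : DifferentiableAt ℝ f p) :
    HasDerivAt (fun e => f (e, p.2.1, p.2.2)) (fderiv ℝ f p ((1:ℝ),(0:ℝ),(0:ℝ))) p.1 := by
  have hc : HasDerivAt (fun e : ℝ => ((e, p.2.1, p.2.2) : ℝ×ℝ×ℝ)) ((1:ℝ),(0:ℝ),(0:ℝ)) p.1 :=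
    (hasDerivAt_id p.1).prodMk ((hasDerivAt_const _ p.2.1).prodMk (hasDerivAt_const _ p.2.2))
  have := hd.hasFDerivAt.comp_hasDerivAt p.1 hc
  exact this

/-- Differentiation under the interval integral sign, at parameter `0`. -/
lemma PF_hasDerivAt_integral {F F' : ℝ → ℝ → ℝ} {t δ : ℝ} (hδ : 0 < δ)
    (hcont : ∀ e ∈ Icc (-δ) δ, ContinuousOn (F e) (uIcc 0 t))
    (hcont' : ContinuousOn (fun q : ℝ×ℝ => F' q.1 q.2) (Icc (-δ) δ ×ˢ uIcc 0 t))
    (hderiv : ∀ e ∈ Ioo (-δ) δ, ∀ s ∈ uIcc 0 t, HasDerivAt (fun e' => F e' s) (F' e s) e) :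
    HasDerivAt (fun e => ∫ s in (0:ℝ)..t, F e s) (∫ s in (0:ℝ)..t, F' 0 s) 0 := by
  obtain ⟨C, hC⟩ := ((isCompact_Icc.prod isCompact_uIcc).exists_bound_of_continuousOn hcont')
  have h0mem : (0:ℝ) ∈ Icc (-δ) δ := ⟨by linarith, by linarith⟩
  have huIoc : Set.uIoc (0:ℝ) t ⊆ uIcc 0 t := Ioc_subset_Icc_self
  refine (intervalIntegral.hasDerivAt_integral_of_dominated_loc_of_deriv_le
      (F := F) (F' := F') (bound := fun _ => C) (Metric.ball_mem_nhds _ (half_pos hδ)) ?_ ?_ ?_ ?_ ?_ ?_).2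
  · filter_upwards [Icc_mem_nhds (show -δ < 0 by linarith) (show (0:ℝ) < δ from hδ)] with e he
    exact ((hcont e he).mono huIoc).aestronglyMeasurable measurableSet_uIoc
  · exact (hcont 0 h0mem).intervalIntegrable
  · have hc : ContinuousOn (fun s => F' 0 s) (uIcc 0 t) := by
      refine hcont'.comp ((continuous_const.prodMk continuous_id).continuousOn) ?_
      exact fun s hs => ⟨h0mem, hs⟩
    exact (hc.mono huIoc).aestronglyMeasurable measurableSet_uIoc
  · refine Filter.Eventually.of_forall (fun s => fun hs e he => ?_)
    rw [Real.ball_eq_Ioo] at he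
    have : (e, s) ∈ Icc (-δ) δ ×ˢ uIcc 0 t :=
      ⟨⟨by simpa using by linarith [he.1, he.2], by linarith [he.1, he.2]⟩, huIoc hs⟩
    simpa [Real.norm_eq_abs] using hC (e, s) ⟨⟨by linarith [he.1], by linarith [he.2]⟩, huIoc hs⟩
  · exact intervalIntegrable_const
  · refine Filter.Eventually.of_forall (fun s => fun hs e he => ?_)
    rw [Real.ball_eq_Ioo] at he
    exact hderiv e ⟨by linarith [he.1], by linarith [he.2]⟩ s (huIoc hs)

end PFhelpers

/-- differentiating the flow identity
`Φ_{xx}(ε,t,x) = Φ_x(ε,t,x)·(μ(u+εw) ∫₀ᵗ Φ_x ds − m₀^ε(x) ∫₀ᵗ Φ_x⁻² ds)`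
with respect to `ε` at `ε = 0`; here `φ = Φ(0,·,·)`, `ψ = ∂_ε Φ|_{ε=0}`,
`m₀ = μ(u) − u''` and `Aw = μ(w) − w''`. -/
theorem perturbed_flow_second_derivative_formula
    (u w : ℝ → ℝ) (huper : Function.Periodic u 1) (hwper : Function.Periodic w 1)
    (hu : ContDiff ℝ 3 u) (hw : ContDiff ℝ 3 w)
    (ε₀ : ℝ) (hε₀ : 0 < ε₀) (a b : ℝ) (ha : a < 0) (hb : 0 < b)
    (Φ : ℝ → ℝ → ℝ → ℝ)
    (hΦ : ContDiffOn ℝ (⊤ : ℕ∞) (fun p : ℝ × ℝ × ℝ => Φ p.1 p.2.1 p.2.2)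
      (Set.Ioo (-ε₀) ε₀ ×ˢ Set.Ioo a b ×ˢ Set.univ))
    (hlift : ∀ ε ∈ Set.Ioo (-ε₀) ε₀, ∀ t ∈ Set.Ioo a b, ∀ x : ℝ,
      Φ ε t (x + 1) = Φ ε t x + 1)
    (hpos : ∀ ε ∈ Set.Ioo (-ε₀) ε₀, ∀ t ∈ Set.Ioo a b, ∀ x : ℝ,
      0 < deriv (Φ ε t) x)
    (hinit : ∀ ε ∈ Set.Ioo (-ε₀) ε₀, ∀ x : ℝ, Φ ε 0 x = x)
    (hODE : ∀ ε ∈ Set.Ioo (-ε₀) ε₀, ∀ t ∈ Set.Ioo a b, ∀ x : ℝ,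
      iteratedDeriv 2 (Φ ε t) x
        = deriv (Φ ε t) x *
            (circMean (fun y => u y + ε * w y)
                * (∫ s in (0:ℝ)..t, deriv (Φ ε s) x)
              - (circMean (fun y => u y + ε * w y)
                  - iteratedDeriv 2 (fun y => u y + ε * w y) x)
                * ∫ s in (0:ℝ)..t, ((deriv (Φ ε s) x) ^ 2)⁻¹)) :
    ∀ t ∈ Set.Ioo a b, ∀ x : ℝ,
      iteratedDeriv 2 (fun y => deriv (fun ε => Φ ε t y) 0) x
        = deriv (fun y => deriv (fun ε => Φ ε t y) 0) x *
            (circMean u * (∫ s in (0:ℝ)..t, deriv (Φ 0 s) x)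
              - (circMean u - iteratedDeriv 2 u x)
                  * ∫ s in (0:ℝ)..t, ((deriv (Φ 0 s) x) ^ 2)⁻¹)
          + deriv (Φ 0 t) x *
              (circMean w * (∫ s in (0:ℝ)..t, deriv (Φ 0 s) x)
                + circMean u
                    * ∫ s in (0:ℝ)..t, deriv (fun y => deriv (fun ε => Φ ε s y) 0) x)
          - deriv (Φ 0 t) x *
              ((circMean w - iteratedDeriv 2 w x)
                  * (∫ s in (0:ℝ)..t, ((deriv (Φ 0 s) x) ^ 2)⁻¹)
                - 2 * (circMean u - iteratedDeriv 2 u x)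
                    * ∫ s in (0:ℝ)..t,
                        deriv (fun y => deriv (fun ε => Φ ε s y) 0) x
                          * ((deriv (Φ 0 s) x) ^ 3)⁻¹) := by
  intro t ht x
  set G : ℝ×ℝ×ℝ → ℝ := (fun p : ℝ × ℝ × ℝ => Φ p.1 p.2.1 p.2.2) with hGdef
  set S : Set (ℝ×ℝ×ℝ) := Set.Ioo (-ε₀) ε₀ ×ˢ Set.Ioo a b ×ˢ Set.univ with hSdef
  have hS : IsOpen S := isOpen_Ioo.prod (isOpen_Ioo.prod isOpen_univ)
  have hmemS : ∀ {e s : ℝ}, e ∈ Ioo (-ε₀) ε₀ → s ∈ Ioo a b → ∀ y : ℝ, ((e,s,y) : ℝ×ℝ×ℝ) ∈ S :=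
    fun he hs y => ⟨he, hs, mem_univ y⟩
  have h0 : (0:ℝ) ∈ Ioo (-ε₀) ε₀ := ⟨by linarith, hε₀⟩
  -- the partial-derivative functions
  set Gx : ℝ×ℝ×ℝ → ℝ := fun p => fderiv ℝ G p ((0:ℝ),(0:ℝ),(1:ℝ)) with hGxdef
  set G1 : ℝ×ℝ×ℝ → ℝ := fun p => fderiv ℝ G p ((1:ℝ),(0:ℝ),(0:ℝ)) with hG1def
  set Gxx : ℝ×ℝ×ℝ → ℝ := fun p => fderiv ℝ Gx p ((0:ℝ),(0:ℝ),(1:ℝ)) with hGxxdef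
  set G1x : ℝ×ℝ×ℝ → ℝ := fun p => fderiv ℝ G1 p ((0:ℝ),(0:ℝ),(1:ℝ)) with hG1xdef
  set G1xx : ℝ×ℝ×ℝ → ℝ := fun p => fderiv ℝ G1x p ((0:ℝ),(0:ℝ),(1:ℝ)) with hG1xxdef
  have hsGx : ContDiffOn ℝ (⊤:ℕ∞) Gx S := PF_contDiffOn_fderiv_apply hΦ hS _
  have hsG1 : ContDiffOn ℝ (⊤:ℕ∞) G1 S := PF_contDiffOn_fderiv_apply hΦ hS _
  have hsGxx : ContDiffOn ℝ (⊤:ℕ∞) Gxx S := PF_contDiffOn_fderiv_apply hsGx hS _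
  have hsG1x : ContDiffOn ℝ (⊤:ℕ∞) G1x S := PF_contDiffOn_fderiv_apply hsG1 hS _
  -- slice facts
  have hF1 : ∀ {e s : ℝ}, e ∈ Ioo (-ε₀) ε₀ → s ∈ Ioo a b → ∀ y : ℝ,
      deriv (Φ e s) y = Gx (e,s,y) := by
    intro e s he hs y
    exact (PF_hasDerivAt_slice3 (p := (e,s,y)) (PF_diffAt hΦ hS (hmemS he hs y))).deriv
  have hF2 : ∀ {s : ℝ}, s ∈ Ioo a b → ∀ y : ℝ,
      deriv (fun e => Φ e s y) 0 = G1 (0,s,y) := by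
    intro s hs y
    exact (PF_hasDerivAt_slice1 (p := ((0:ℝ),s,y)) (PF_diffAt hΦ hS (hmemS h0 hs y))).deriv
  have hF3 : ∀ {s : ℝ}, s ∈ Ioo a b → ∀ y : ℝ,
      deriv (fun z => deriv (fun e => Φ e s z) 0) y = G1x (0,s,y) := by
    intro s hs y
    have hfun : (fun z => deriv (fun e => Φ e s z) 0) = fun z => G1 (0,s,z) :=
      funext (hF2 hs)
    rw [hfun]
    exact (PF_hasDerivAt_slice3 (p := ((0:ℝ),s,y)) (PF_diffAt hsG1 hS (hmemS h0 hs y))).deriv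
  have hiter2 : ∀ f : ℝ → ℝ, iteratedDeriv 2 f = deriv (deriv f) := by
    intro f
    rw [show (2:ℕ) = 1+1 from rfl, iteratedDeriv_succ, iteratedDeriv_one]
  have hF4 : iteratedDeriv 2 (fun z => deriv (fun e => Φ e t z) 0) x = G1xx (0,t,x) := by
    rw [hiter2]
    have hfun : deriv (fun z => deriv (fun e => Φ e t z) 0) = fun z => G1x (0,t,z) :=
      funext (hF3 ht)
    rw [hfun]
    exact (PF_hasDerivAt_slice3 (p := ((0:ℝ),t,x)) (PF_diffAt hsG1x hS (hmemS h0 ht x))).deriv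
  have hF5 : ∀ {e s : ℝ}, e ∈ Ioo (-ε₀) ε₀ → s ∈ Ioo a b → ∀ y : ℝ,
      iteratedDeriv 2 (Φ e s) y = Gxx (e,s,y) := by
    intro e s he hs y
    rw [hiter2]
    have hfun : deriv (Φ e s) = fun z => Gx (e,s,z) := funext (hF1 he hs)
    rw [hfun]
    exact (PF_hasDerivAt_slice3 (p := (e,s,y)) (PF_diffAt hsGx hS (hmemS he hs y))).deriv
  -- swap facts
  have hswap : ∀ p ∈ S, fderiv ℝ Gx p ((1:ℝ),(0:ℝ),(0:ℝ)) = G1x p := by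
    intro p hp
    exact (PF_fderiv_swap hΦ hS hp ((0:ℝ),(0:ℝ),(1:ℝ)) ((1:ℝ),(0:ℝ),(0:ℝ)))
  have hswap2 : ∀ p ∈ S, fderiv ℝ Gxx p ((1:ℝ),(0:ℝ),(0:ℝ)) = G1xx p := by
    intro p hp
    have h1 : fderiv ℝ Gxx p ((1:ℝ),(0:ℝ),(0:ℝ))
        = fderiv ℝ (fun q => fderiv ℝ Gx q ((1:ℝ),(0:ℝ),(0:ℝ))) p ((0:ℝ),(0:ℝ),(1:ℝ)) :=
      PF_fderiv_swap hsGx hS hp ((0:ℝ),(0:ℝ),(1:ℝ)) ((1:ℝ),(0:ℝ),(0:ℝ))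
    have h2 : (fun q => fderiv ℝ Gx q ((1:ℝ),(0:ℝ),(0:ℝ))) =ᶠ[nhds p] G1x :=
      Filter.eventuallyEq_of_mem (hS.mem_nhds hp) (fun q hq => hswap q hq)
    rw [h1, show fderiv ℝ (fun q => fderiv ℝ Gx q ((1:ℝ),(0:ℝ),(0:ℝ))) p = fderiv ℝ G1x p
      from h2.fderiv_eq]
  -- derivative in e of Gx and Gxx slices
  have hEA : ∀ {e s : ℝ}, e ∈ Ioo (-ε₀) ε₀ → s ∈ Ioo a b →
      HasDerivAt (fun e' => Gx (e',s,x)) (G1x (e,s,x)) e := by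
    intro e s he hs
    have h := PF_hasDerivAt_slice1 (p := (e,s,x)) (PF_diffAt hsGx hS (hmemS he hs x))
    rwa [hswap _ (hmemS he hs x)] at h
  have hEB : HasDerivAt (fun e' => Gxx (e',t,x)) (G1xx (0,t,x)) 0 := by
    have h := PF_hasDerivAt_slice1 (p := ((0:ℝ),t,x)) (PF_diffAt hsGxx hS (hmemS h0 ht x))
    rwa [hswap2 _ (hmemS h0 ht x)] at h
  -- positivity
  have hposGx : ∀ {e s : ℝ}, e ∈ Ioo (-ε₀) ε₀ → s ∈ Ioo a b → 0 < Gx (e,s,x) := by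
    intro e s he hs
    have := hpos e he s hs x
    rwa [hF1 he hs x] at this
  -- circMean linearity
  have hcmw : IntervalIntegrable w MeasureTheory.volume 0 1 := hw.continuous.intervalIntegrable _ _
  have hE3 : ∀ e : ℝ, circMean (fun y => u y + e * w y) = circMean u + e * circMean w := by
    intro e
    have h1 : IntervalIntegrable u MeasureTheory.volume 0 1 := hu.continuous.intervalIntegrable _ _
    have h2 : IntervalIntegrable (fun y => e * w y) MeasureTheory.volume 0 1 :=
      (continuous_const.mul hw.continuous).intervalIntegrable _ _
    show (∫ y in (0:ℝ)..1, (u y + e * w y)) = _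
    rw [intervalIntegral.integral_add h1 h2, intervalIntegral.integral_const_mul]
    rfl
  -- second derivative of u + e w
  have hdu : Differentiable ℝ u := hu.differentiable (by norm_num)
  have hdw : Differentiable ℝ w := hw.differentiable (by norm_num)
  have hdu' : Differentiable ℝ (deriv u) := by
    have := hu.differentiable_iteratedDeriv 1 (by norm_num)
    rwa [iteratedDeriv_one] at this
  have hdw' : Differentiable ℝ (deriv w) := by
    have := hw.differentiable_iteratedDeriv 1 (by norm_num)
    rwa [iteratedDeriv_one] at this
  have hE4 : ∀ e : ℝ, iteratedDeriv 2 (fun y => u y + e * w y) x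
      = iteratedDeriv 2 u x + e * iteratedDeriv 2 w x := by
    intro e
    rw [hiter2, hiter2, hiter2]
    have h1 : deriv (fun y => u y + e * w y) = fun y => deriv u y + e * deriv w y := by
      funext y
      rw [deriv_fun_add (hdu y) ((hdw y).const_mul e), deriv_const_mul e (hdw y)]
    rw [h1, deriv_fun_add (hdu' x) ((hdw' x).const_mul e), deriv_const_mul e (hdw' x)]
  -- uIcc ⊆ Ioo a b
  have hsub : uIcc (0:ℝ) t ⊆ Ioo a b := ordConnected_Ioo.uIcc_subset ⟨ha, hb⟩ ht
  have hIccsub : Icc (-(ε₀/2)) (ε₀/2) ⊆ Ioo (-ε₀) ε₀ := by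
    intro e he
    exact ⟨by linarith [he.1], by linarith [he.2]⟩
  -- continuity of slices on the compact parameter box
  have hmapsTo : ∀ q : ℝ×ℝ, q ∈ Icc (-(ε₀/2)) (ε₀/2) ×ˢ uIcc 0 t → ((q.1, q.2, x) : ℝ×ℝ×ℝ) ∈ S :=
    fun q hq => hmemS (hIccsub hq.1) (hsub hq.2) x
  have hcGx : ContinuousOn (fun q : ℝ×ℝ => Gx (q.1, q.2, x)) (Icc (-(ε₀/2)) (ε₀/2) ×ˢ uIcc 0 t) :=
    (hsGx.continuousOn).comp
      ((continuous_fst.prodMk (continuous_snd.prodMk continuous_const)).continuousOn) hmapsTo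
  have hcG1x : ContinuousOn (fun q : ℝ×ℝ => G1x (q.1, q.2, x)) (Icc (-(ε₀/2)) (ε₀/2) ×ˢ uIcc 0 t) :=
    (hsG1x.continuousOn).comp
      ((continuous_fst.prodMk (continuous_snd.prodMk continuous_const)).continuousOn) hmapsTo
  -- first integral derivative
  have hslice_cont : ∀ e ∈ Icc (-(ε₀/2)) (ε₀/2), ContinuousOn (fun s => Gx (e,s,x)) (uIcc 0 t) := by
    intro e he
    exact (hsGx.continuousOn).comp
      ((continuous_const.prodMk (continuous_id.prodMk continuous_const)).continuousOn)
      (fun s hs => hmemS (hIccsub he) (hsub hs) x)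
  have H1 : HasDerivAt (fun e => ∫ s in (0:ℝ)..t, Gx (e,s,x))
      (∫ s in (0:ℝ)..t, G1x (0,s,x)) 0 := by
    refine PF_hasDerivAt_integral (F := fun e s => Gx (e,s,x)) (F' := fun e s => G1x (e,s,x))
      (half_pos hε₀) hslice_cont hcG1x ?_
    intro e he s hs
    exact hEA (hIccsub ⟨le_of_lt he.1, le_of_lt he.2⟩) (hsub hs)
  -- second integral derivative
  have hposK : ∀ e ∈ Icc (-(ε₀/2)) (ε₀/2), ∀ s ∈ uIcc 0 t, 0 < Gx (e,s,x) :=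
    fun e he s hs => hposGx (hIccsub he) (hsub hs)
  have H2 : HasDerivAt (fun e => ∫ s in (0:ℝ)..t, ((Gx (e,s,x))^2)⁻¹)
      (∫ s in (0:ℝ)..t, -((2:ℕ) * Gx (0,s,x) ^ 1 * G1x (0,s,x)) / (Gx (0,s,x) ^ 2) ^ 2) 0 := by
    refine PF_hasDerivAt_integral (F := fun e s => ((Gx (e,s,x))^2)⁻¹)
      (F' := fun e s => -((2:ℕ) * Gx (e,s,x) ^ 1 * G1x (e,s,x)) / (Gx (e,s,x) ^ 2) ^ 2)
      (half_pos hε₀) ?_ ?_ ?_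
    · intro e he
      exact ((hslice_cont e he).pow 2).inv₀
        (fun s hs => pow_ne_zero 2 (ne_of_gt (hposK e he s hs)))
    · refine ContinuousOn.div ?_ ((hcGx.pow 2).pow 2) ?_
      · exact ((continuousOn_const.mul (hcGx.pow 1)).mul hcG1x).neg
      · intro q hq
        exact pow_ne_zero 2 (pow_ne_zero 2 (ne_of_gt (hposK q.1 hq.1 q.2 hq.2)))
    · intro e he s hs
      have hg := hEA (e := e) (s := s) (hIccsub ⟨le_of_lt he.1, le_of_lt he.2⟩) (hsub hs)
      have hne : Gx (e,s,x) ^ 2 ≠ 0 :=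
        pow_ne_zero 2 (ne_of_gt (hposGx (hIccsub ⟨le_of_lt he.1, le_of_lt he.2⟩) (hsub hs)))
      exact (hg.pow 2).inv hne
  -- abbreviations for the integrals at ε = 0
  set I1 : ℝ := ∫ s in (0:ℝ)..t, Gx (0,s,x) with hI1def
  set I2 : ℝ := ∫ s in (0:ℝ)..t, ((Gx (0,s,x))^2)⁻¹ with hI2def
  set J1 : ℝ := ∫ s in (0:ℝ)..t, G1x (0,s,x) with hJ1def
  set K2 : ℝ := ∫ s in (0:ℝ)..t, G1x (0,s,x) * ((Gx (0,s,x))^3)⁻¹ with hK2def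
  have hD2 : (∫ s in (0:ℝ)..t, -((2:ℕ) * Gx (0,s,x) ^ 1 * G1x (0,s,x)) / (Gx (0,s,x) ^ 2) ^ 2)
      = (-2) * K2 := by
    rw [hK2def, ← intervalIntegral.integral_const_mul]
    apply intervalIntegral.integral_congr
    intro s hs
    have hp := hposGx h0 (hsub hs)
    have hne : Gx (0,s,x) ≠ 0 := ne_of_gt hp
    push_cast
    field_simp
  rw [hD2] at H2
  -- scalar coefficient derivatives
  have hM : HasDerivAt (fun e : ℝ => circMean u + e * circMean w) (circMean w) 0 :=
    (hasDerivAt_mul_const (circMean w)).const_add (circMean u)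
  have hU : HasDerivAt (fun e : ℝ => iteratedDeriv 2 u x + e * iteratedDeriv 2 w x)
      (iteratedDeriv 2 w x) 0 := (hasDerivAt_mul_const _).const_add _
  have hAt : HasDerivAt (fun e' => Gx (e',t,x)) (G1x (0,t,x)) 0 := hEA h0 ht
  have hR := hAt.mul ((hM.mul H1).sub ((hM.sub hU).mul H2))
  -- the second space-derivative slice agrees with the ODE right-hand side near 0
  have hEqfun : (fun e' => Gxx (e',t,x)) =ᶠ[nhds (0:ℝ)]
      (fun e => Gx (e,t,x) *
        ((circMean u + e * circMean w) * (∫ s in (0:ℝ)..t, Gx (e,s,x))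
          - ((circMean u + e * circMean w)
              - (iteratedDeriv 2 u x + e * iteratedDeriv 2 w x))
            * ∫ s in (0:ℝ)..t, ((Gx (e,s,x))^2)⁻¹)) := by
    filter_upwards [Ioo_mem_nhds (show -ε₀ < 0 by linarith) hε₀] with e he
    have h1 := hODE e he t ht x
    have hIa : (∫ s in (0:ℝ)..t, deriv (Φ e s) x) = ∫ s in (0:ℝ)..t, Gx (e,s,x) :=
      intervalIntegral.integral_congr (fun s hs => hF1 he (hsub hs) x)
    have hIb : (∫ s in (0:ℝ)..t, ((deriv (Φ e s) x)^2)⁻¹)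
        = ∫ s in (0:ℝ)..t, ((Gx (e,s,x))^2)⁻¹ :=
      intervalIntegral.integral_congr (fun s hs => by rw [hF1 he (hsub hs) x])
    rw [hF1 he ht x, hE3 e, hE4 e, hIa, hIb] at h1
    exact (hF5 he ht x).symm.trans h1
  have hkey := hEB.unique (hR.congr_of_eventuallyEq hEqfun)
  -- rewrite the goal into the abbreviations
  have hIa0 : (∫ s in (0:ℝ)..t, deriv (Φ 0 s) x) = I1 :=
    intervalIntegral.integral_congr (fun s hs => hF1 h0 (hsub hs) x)
  have hIb0 : (∫ s in (0:ℝ)..t, ((deriv (Φ 0 s) x)^2)⁻¹) = I2 :=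
    intervalIntegral.integral_congr (fun s hs => by rw [hF1 h0 (hsub hs) x])
  have hJa0 : (∫ s in (0:ℝ)..t, deriv (fun y => deriv (fun ε => Φ ε s y) 0) x) = J1 :=
    intervalIntegral.integral_congr (fun s hs => hF3 (hsub hs) x)
  have hKa0 : (∫ s in (0:ℝ)..t,
      deriv (fun y => deriv (fun ε => Φ ε s y) 0) x * ((deriv (Φ 0 s) x)^3)⁻¹) = K2 :=
    intervalIntegral.integral_congr
      (fun s hs => by rw [hF3 (hsub hs) x, hF1 h0 (hsub hs) x])
  rw [hF4, hF3 ht x, hF1 h0 ht x, hIa0, hIb0, hJa0, hKa0, hkey]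
  beta_reduce -- (may be a no-op)
  simp only [Pi.mul_apply, Pi.sub_apply]
  ring
end
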